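/- Let m, n be finite index types, let A : Matrix m n ℂ, let P : Matrix n n ℂ and Q : Matrix m m ℂ be positive semidefinite, and suppose Q·A = A·P. Then √Q·A = A·√P, where √P and √Q denote the positive semidefinite square roots of P and Q. -/

import Mathlib

open Matrix ComplexOrder

/-- The positive semidefinite square root of a positive semidefinite matrix, with the
definition `Matrix.PosSemidef.sqrt` had in the older Mathlib (removed since). -/
noncomputable def Matrix.PosSemidef.sqrt {n : Type*} [Fintype n] [DecidableEq n]
    {A : Matrix n n ℂ} (hA : A.PosSemidef) : Matrix n n ℂ :=
  hA.1.eigenvectorUnitary.1 * diagonal ((↑) ∘ (√·) ∘ hA.1.eigenvalues) *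
    (star hA.1.eigenvectorUnitary : Matrix n n ℂ)

open Polynomial

lemma aeval_diagonal' {n : Type*} [Fintype n] [DecidableEq n] (d : n → ℂ) (q : ℂ[X]) :
    aeval (Matrix.diagonal d) q = Matrix.diagonal (fun i => q.eval (d i)) := by
  induction q using Polynomial.induction_on with
  | C a => simp [Matrix.algebraMap_eq_diagonal, Pi.algebraMap_def]
  | add p q hp hq => simp [hp, hq, Matrix.diagonal_add]
  | monomial k a ih =>
      simp only [_root_.map_mul, aeval_C, aeval_X_pow, eval_mul, eval_C, eval_pow, eval_X,
        Matrix.diagonal_pow, Matrix.algebraMap_eq_diagonal, Pi.algebraMap_def,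
        Matrix.diagonal_mul_diagonal]
      rfl

lemma aeval_intertwine' {m n : Type*} [Fintype m] [Fintype n] [DecidableEq m] [DecidableEq n]
    (A : Matrix m n ℂ) (P : Matrix n n ℂ) (Q : Matrix m m ℂ)
    (h : Q * A = A * P) (q : ℂ[X]) : (aeval Q q) * A = A * (aeval P q) := by
  have hpow : ∀ k : ℕ, Q ^ k * A = A * P ^ k := by
    intro k
    induction k with
    | zero => simp
    | succ k ih =>
        rw [pow_succ, Matrix.mul_assoc, h, ← Matrix.mul_assoc, ih, Matrix.mul_assoc, ← pow_succ]
  induction q using Polynomial.induction_on with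
  | C a =>
      simp [Algebra.algebraMap_eq_smul_one, Matrix.smul_mul, Matrix.mul_smul]
  | add p q hp hq => simp [Matrix.add_mul, Matrix.mul_add, hp, hq]
  | monomial k a ih =>
      simp only [_root_.map_mul, aeval_C, aeval_X_pow, Algebra.algebraMap_eq_smul_one,
        smul_mul_assoc, one_mul, Matrix.mul_smul]
      rw [Matrix.smul_mul, hpow]

lemma aeval_conj' {n : Type*} [Fintype n] [DecidableEq n] (U D : Matrix n n ℂ)
    (hU : U ∈ Matrix.unitaryGroup n ℂ) (q : ℂ[X]) :
    aeval (U * D * star U) q = U * aeval D q * star U := by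
  have h1 : star U * U = 1 := Matrix.mem_unitaryGroup_iff'.mp hU
  have h2 : U * star U = 1 := Matrix.mem_unitaryGroup_iff.mp hU
  induction q using Polynomial.induction_on with
  | C a =>
      simp only [aeval_C, Algebra.algebraMap_eq_smul_one, Matrix.mul_smul, Matrix.smul_mul,
        mul_one, h2]
  | add p q hp hq => simp [hp, hq, mul_add, add_mul]
  | monomial k a ih =>
      have hpow : ∀ j : ℕ, (U * D * star U) ^ j = U * D ^ j * star U := by
        intro j; induction j with
        | zero => simp [h2]
        | succ j ihj =>
            rw [pow_succ, ihj]
            calc U * D ^ j * star U * (U * D * star U)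
                = U * D ^ j * (star U * U) * D * star U := by
                  simp only [Matrix.mul_assoc]
              _ = U * D ^ (j + 1) * star U := by
                  rw [h1, mul_one, pow_succ, ← Matrix.mul_assoc]
      simp only [_root_.map_mul, aeval_C, aeval_X_pow, hpow,
        Algebra.algebraMap_eq_smul_one, smul_mul_assoc, one_mul, Matrix.mul_smul]

lemma aeval_eq_sqrt' {k : Type*} [Fintype k] [DecidableEq k]
    (B : Matrix k k ℂ) (hB : B.PosSemidef) (q : ℂ[X])
    (hq : ∀ i, q.eval (algebraMap ℝ ℂ (hB.1.eigenvalues i))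
      = algebraMap ℝ ℂ (Real.sqrt (hB.1.eigenvalues i))) :
    Polynomial.aeval B q = hB.sqrt := by
  conv_lhs => rw [hB.1.spectral_theorem, Unitary.conjStarAlgAut_apply]
  rw [aeval_conj' _ _ (hB.1.eigenvectorUnitary).2, aeval_diagonal']
  rw [Matrix.PosSemidef.sqrt]
  have hdiag : (fun i => q.eval ((RCLike.ofReal ∘ hB.1.eigenvalues) i)) =
      (RCLike.ofReal ∘ Real.sqrt ∘ hB.1.eigenvalues : k → ℂ) := by
    funext i
    have := hq i
    rw [RCLike.algebraMap_eq_ofReal] at this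
    exact this
  rw [hdiag]
  rfl

/-- **Intertwining of positive semidefinite square roots of matrices**
(the matrix form of the lemma used in Proposition 1.5 of the paper).
If `P`, `Q` are positive semidefinite and `√Q * A = A * √P`, then `√Q * A = A * √P`. -/
theorem sqrt_intertwine_matrix {m n : Type*} [Fintype m] [Fintype n]
    [DecidableEq m] [DecidableEq n]
    (A : Matrix m n ℂ) (P : Matrix n n ℂ) (Q : Matrix m m ℂ)
    (hP : P.PosSemidef) (hQ : Q.PosSemidef) (h : Q * A = A * P) :
    hQ.sqrt * A = A * hP.sqrt := by
  classical
  set s : Finset ℝ :=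
    Finset.univ.image hP.1.eigenvalues ∪ Finset.univ.image hQ.1.eigenvalues with hs
  set p : ℝ[X] := Lagrange.interpolate s id Real.sqrt with hpdef
  have hp : ∀ x ∈ s, p.eval x = Real.sqrt x := by
    intro x hx
    exact Lagrange.eval_interpolate_at_node Real.sqrt (Set.injOn_id _) hx
  set q : ℂ[X] := p.map (algebraMap ℝ ℂ) with hqdef
  have hq : ∀ x ∈ s, q.eval (algebraMap ℝ ℂ x) = algebraMap ℝ ℂ (Real.sqrt x) := by
    intro x hx
    rw [hqdef, eval_map, Polynomial.eval₂_at_apply, hp x hx]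
  have memQ : ∀ i, hQ.1.eigenvalues i ∈ s := fun i =>
    Finset.mem_union_right _ (Finset.mem_image_of_mem _ (Finset.mem_univ i))
  have memP : ∀ i, hP.1.eigenvalues i ∈ s := fun i =>
    Finset.mem_union_left _ (Finset.mem_image_of_mem _ (Finset.mem_univ i))
  have e1 : Polynomial.aeval Q q = hQ.sqrt :=
    aeval_eq_sqrt' Q hQ q (fun i => hq _ (memQ i))
  have e2 : Polynomial.aeval P q = hP.sqrt :=
    aeval_eq_sqrt' P hP q (fun i => hq _ (memP i))
  rw [← e1, ← e2]
  exact aeval_intertwine' A P Q h q
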